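/- Let Λ > 0, m > 0, Q real with 0 < 4ΛQ² ≤ 1, and f(r) = -(Λ/3)r⁴ + r² - 2mr + Q² have four distinct real roots r₋₋ < 0 < r₋ < r₊ < r_c. Assume m² < (1+12ΛQ²+(1-4ΛQ²)^{3/2})/(18Λ) and m > (2Q²/3)((3+√(9-4ΛQ²))/(2Λ))^{-1/2}. Then ((1+√(1-4ΛQ²))/(2Λ))^{1/2} < r_c < ((3+√(9-4ΛQ²))/(2Λ))^{1/2}, and consequently -Λr_c⁴ + r_c² - Q² < 0 and -Λr_c⁴ + 3r_c² - Q² > 0. -/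

import Mathlib

set_option maxHeartbeats 2000000 in
theorem stmt_17 (Λ m Q : ℝ) (hΛ : 0 < Λ) (hm : 0 < m)
    (hQ0 : 0 < 4 * Λ * Q^2) (hQ : 4 * Λ * Q^2 ≤ 1)
    (f : ℝ → ℝ) (hf : ∀ r, f r = -(Λ/3) * r^4 + r^2 - 2*m*r + Q^2)
    (rmm rm rp rc : ℝ)
    (h1 : rmm < 0) (h2 : 0 < rm) (h3 : rm < rp) (h4 : rp < rc)
    (hrmm : f rmm = 0) (hrm : f rm = 0) (hrp : f rp = 0) (hrc : f rc = 0)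
    (hm2 : m^2 < (1 + 12 * Λ * Q^2 + (Real.sqrt (1 - 4 * Λ * Q^2))^3) / (18 * Λ))
    (hmass : m > (2 * Q^2 / 3) * (Real.sqrt ((3 + Real.sqrt (9 - 4 * Λ * Q^2)) / (2*Λ)))⁻¹) :
    Real.sqrt ((1 + Real.sqrt (1 - 4 * Λ * Q^2)) / (2*Λ)) < rc ∧
      rc < Real.sqrt ((3 + Real.sqrt (9 - 4 * Λ * Q^2)) / (2*Λ)) ∧
      -Λ * rc^4 + rc^2 - Q^2 < 0 ∧
      0 < -Λ * rc^4 + 3 * rc^2 - Q^2 := by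
  have hQ2 : 0 < Q^2 := by nlinarith
  set s := Real.sqrt (1 - 4 * Λ * Q^2) with hs_def
  have hs2 : s^2 = 1 - 4 * Λ * Q^2 := Real.sq_sqrt (by linarith)
  have hs0 : 0 ≤ s := Real.sqrt_nonneg _
  have hs1 : s < 1 := by nlinarith
  set t := Real.sqrt (9 - 4 * Λ * Q^2) with ht_def
  have ht2 : t^2 = 9 - 4 * Λ * Q^2 := Real.sq_sqrt (by linarith)
  have ht0 : 0 ≤ t := Real.sqrt_nonneg _
  have ht : 2 ≤ t := by nlinarith
  set a := Real.sqrt ((1 + s) / (2*Λ)) with ha_def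
  have hApos : 0 < (1 + s) / (2*Λ) := by positivity
  have ha2 : a^2 = (1 + s) / (2*Λ) := Real.sq_sqrt hApos.le
  have ha0 : 0 < a := Real.sqrt_pos.mpr hApos
  set b := Real.sqrt ((3 + t) / (2*Λ)) with hb_def
  have hBpos : 0 < (3 + t) / (2*Λ) := by positivity
  have hb2 : b^2 = (3 + t) / (2*Λ) := Real.sq_sqrt hBpos.le
  have hb0 : 0 < b := Real.sqrt_pos.mpr hBpos
  clear_value s t a b
  have h2La : 2 * Λ * a^2 = 1 + s := by rw [ha2]; field_simp
  have h2Lb : 2 * Λ * b^2 = 3 + t := by rw [hb2]; field_simp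
  -- root equations in polynomial form
  have hgc : Λ*rc^4 - 3*rc^2 + 6*m*rc - 3*Q^2 = 0 := by linear_combination 3 * hf rc - 3 * hrc
  have hgp : Λ*rp^4 - 3*rp^2 + 6*m*rp - 3*Q^2 = 0 := by linear_combination 3 * hf rp - 3 * hrp
  have hgm : Λ*rm^4 - 3*rm^2 + 6*m*rm - 3*Q^2 = 0 := by linear_combination 3 * hf rm - 3 * hrm
  have hgmm : Λ*rmm^4 - 3*rmm^2 + 6*m*rmm - 3*Q^2 = 0 := by linear_combination 3 * hf rmm - 3 * hrmm
  -- divided differences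
  have dcm : rc - rmm ≠ 0 := sub_ne_zero.mpr (by linarith)
  have dpm : rp - rmm ≠ 0 := sub_ne_zero.mpr (by linarith)
  have dmm : rm - rmm ≠ 0 := sub_ne_zero.mpr (by linarith)
  have dcp : rc - rp ≠ 0 := sub_ne_zero.mpr (by linarith)
  have dmp : rm - rp ≠ 0 := sub_ne_zero.mpr (by linarith)
  have dcrm : rc - rm ≠ 0 := sub_ne_zero.mpr (by linarith)
  have hA : Λ*(rc^3 + rc^2*rmm + rc*rmm^2 + rmm^3) - 3*(rc + rmm) + 6*m = 0 := by
    have key : (rc - rmm) * (Λ*(rc^3 + rc^2*rmm + rc*rmm^2 + rmm^3) - 3*(rc + rmm) + 6*m) = 0 := by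
      linear_combination hgc - hgmm
    exact (mul_eq_zero.mp key).resolve_left dcm
  have hB : Λ*(rp^3 + rp^2*rmm + rp*rmm^2 + rmm^3) - 3*(rp + rmm) + 6*m = 0 := by
    have key : (rp - rmm) * (Λ*(rp^3 + rp^2*rmm + rp*rmm^2 + rmm^3) - 3*(rp + rmm) + 6*m) = 0 := by
      linear_combination hgp - hgmm
    exact (mul_eq_zero.mp key).resolve_left dpm
  have hC : Λ*(rm^3 + rm^2*rmm + rm*rmm^2 + rmm^3) - 3*(rm + rmm) + 6*m = 0 := by
    have key : (rm - rmm) * (Λ*(rm^3 + rm^2*rmm + rm*rmm^2 + rmm^3) - 3*(rm + rmm) + 6*m) = 0 := by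
      linear_combination hgm - hgmm
    exact (mul_eq_zero.mp key).resolve_left dmm
  have hD : Λ*(rc^2 + rc*rp + rp^2 + (rc + rp)*rmm + rmm^2) - 3 = 0 := by
    have key : (rc - rp) * (Λ*(rc^2 + rc*rp + rp^2 + (rc + rp)*rmm + rmm^2) - 3) = 0 := by
      linear_combination hA - hB
    exact (mul_eq_zero.mp key).resolve_left dcp
  have hE : Λ*(rm^2 + rm*rp + rp^2 + (rm + rp)*rmm + rmm^2) - 3 = 0 := by
    have key : (rm - rp) * (Λ*(rm^2 + rm*rp + rp^2 + (rm + rp)*rmm + rmm^2) - 3) = 0 := by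
      linear_combination hC - hB
    exact (mul_eq_zero.mp key).resolve_left dmp
  have hsum : rmm + rm + rp + rc = 0 := by
    have key : (rc - rm) * (Λ * (rmm + rm + rp + rc)) = 0 := by
      linear_combination hD - hE
    have h' := (mul_eq_zero.mp key).resolve_left dcrm
    exact (mul_eq_zero.mp h').resolve_left hΛ.ne'
  have he2 : Λ*(rmm*rm + rmm*rp + rmm*rc + rm*rp + rm*rc + rp*rc) + 3 = 0 := by
    linear_combination (Λ*(rc + rp + rmm)) * hsum - hD
  have he3 : Λ*(rmm*rm*rp + rmm*rm*rc + rmm*rp*rc + rm*rp*rc) + 6*m = 0 := by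
    linear_combination (rc + rmm) * he2 + hA - (Λ*(rc^2 + rc*rmm + rmm^2)) * hsum
  have he4 : Λ*(rmm*rm*rp*rc) + 3*Q^2 = 0 := by
    linear_combination rmm * he3 - rmm^2 * he2 + Λ*rmm^3 * hsum - hgmm
  have key : f a = -(Λ/3)*(a - rmm)*(a - rm)*(a - rp)*(a - rc) := by
    linear_combination hf a - (Λ*a^3/3)*hsum + (a^2/3)*he2 - (a/3)*he3 + (1/3)*he4
  -- mass bound gives f a > 0
  have hQs : 4*Λ*Q^2 = 1 - s^2 := by linarith [hs2]
  have h18 : 18*Λ*m^2 < 4 - 3*s^2 + s^3 := by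
    have hm2' : m^2 * (18*Λ) < 1 + 12 * Λ * Q^2 + s^3 :=
      (lt_div_iff₀ (by positivity)).mp hm2
    linarith [hm2', hQs]
  have hmlt : 3*m*a < a^2 + 2*Q^2 := by
    have e1 : 4*Λ^2*(a^2 + 2*Q^2)^2 = ((1+s)*(2-s))^2 := by
      linear_combination (2*Λ*a^2 + 4*Λ*Q^2 + (1+s) + (1-s^2)) * h2La
        + (2*Λ*a^2 + 4*Λ*Q^2 + (1+s) + (1-s^2)) * hQs
    have e2 : 4*Λ^2*(3*m*a)^2 = 18*Λ*(1+s)*m^2 := by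
      linear_combination (18*Λ*m^2) * h2La
    have h18b : 18*Λ*(1+s)*m^2 < (1+s)^2*(2-s)^2 := by
      have h := mul_lt_mul_of_pos_left h18 (show (0:ℝ) < 1 + s by linarith)
      linarith [h]
    have hL2 : (0:ℝ) < 4*Λ^2 := by positivity
    have hsq' : 4*Λ^2*(3*m*a)^2 < 4*Λ^2*(a^2+2*Q^2)^2 := by
      rw [e1, e2]; linarith [h18b]
    have hsq : (3*m*a)^2 < (a^2 + 2*Q^2)^2 := (mul_lt_mul_iff_right₀ hL2).mp hsq'
    have hnn : (0:ℝ) ≤ a^2 + 2*Q^2 := by positivity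
    exact lt_of_pow_lt_pow_left₀ 2 hnn hsq
  have hLa4 : Λ * a^4 = a^2 - Q^2 := by
    have h' : 4*Λ*(Λ * a^4) = 4*Λ*(a^2 - Q^2) := by
      linear_combination (2*Λ*a^2 + (1+s) - 2) * h2La + hQs
    exact mul_left_cancel₀ (by positivity : (4:ℝ)*Λ ≠ 0) h'
  have hfa_pos : 0 < f a := by
    rw [hf a]
    linarith [hLa4, hmlt]
  -- a < rc
  have harc : a < rc := by
    by_contra hcon
    push_neg at hcon
    have f1 : 0 < a - rmm := by linarith
    have f2 : 0 < a - rm := by linarith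
    have f3 : 0 < a - rp := by linarith
    have f4 : 0 ≤ a - rc := by linarith
    have hprod : 0 ≤ (a - rmm)*(a - rm)*(a - rp)*(a - rc) :=
      mul_nonneg (mul_nonneg (mul_nonneg f1.le f2.le) f3.le) f4
    have hmul : 0 ≤ Λ * ((a - rmm)*(a - rm)*(a - rp)*(a - rc)) := mul_nonneg hΛ.le hprod
    have : f a ≤ 0 := by rw [key]; linarith [hmul]
    linarith
  have hrc0 : 0 < rc := lt_trans ha0 harc
  have h4L : (0:ℝ) < 4*Λ := by linarith
  have hrc2a : a^2 < rc^2 := pow_lt_pow_left₀ harc ha0.le (by norm_num)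
  have hga : 1 + s < 2*Λ*rc^2 := by
    have := mul_lt_mul_of_pos_left hrc2a (show (0:ℝ) < 2*Λ by linarith)
    linarith [h2La]
  -- rc < b
  have hrcb : rc < b := by
    by_contra hcon
    push_neg at hcon
    have hrc2 : b^2 ≤ rc^2 := pow_le_pow_left₀ hb0.le hcon 2
    have hfac2 : Λ*rc^4 - 3*rc^2 + Q^2 = (2*Λ*rc^2 - (3+t))*(2*Λ*rc^2 - (3-t))/(4*Λ) := by
      rw [eq_div_iff (by positivity : (4:ℝ)*Λ ≠ 0)]
      linear_combination ht2
    have f1 : 0 ≤ 2*Λ*rc^2 - (3+t) := by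
      have := mul_le_mul_of_nonneg_left hrc2 (show (0:ℝ) ≤ 2*Λ by linarith)
      linarith [h2Lb]
    have f2 : 0 < 2*Λ*rc^2 - (3-t) := by linarith
    have hge : 0 ≤ Λ*rc^4 - 3*rc^2 + Q^2 := by
      rw [hfac2]
      exact div_nonneg (mul_nonneg f1 f2.le) h4L.le
    have hmb : 2*Q^2/3 < m*b := by
      have h := mul_lt_mul_of_pos_right hmass hb0
      calc 2*Q^2/3 = 2*Q^2/3 * b⁻¹ * b := by field_simp
        _ < m * b := h
    have hmrc : m*b ≤ m*rc := mul_le_mul_of_nonneg_left hcon hm.le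
    linarith [hgc, hge, hmb, hmrc]
  refine ⟨harc, hrcb, ?_, ?_⟩
  · have hfac1 : Λ*rc^4 - rc^2 + Q^2 = (2*Λ*rc^2 - (1+s))*(2*Λ*rc^2 - (1-s))/(4*Λ) := by
      rw [eq_div_iff (by positivity : (4:ℝ)*Λ ≠ 0)]
      linear_combination hs2
    have f1 : 0 < 2*Λ*rc^2 - (1+s) := by linarith [hga]
    have f2 : 0 < 2*Λ*rc^2 - (1-s) := by linarith [hga, hs0]
    have : 0 < Λ*rc^4 - rc^2 + Q^2 := by
      rw [hfac1]; exact div_pos (mul_pos f1 f2) h4L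
    linarith
  · have hfac2 : Λ*rc^4 - 3*rc^2 + Q^2 = (2*Λ*rc^2 - (3+t))*(2*Λ*rc^2 - (3-t))/(4*Λ) := by
      rw [eq_div_iff (by positivity : (4:ℝ)*Λ ≠ 0)]
      linear_combination ht2
    have hrc2 : rc^2 < b^2 := pow_lt_pow_left₀ hrcb hrc0.le (by norm_num)
    have f1 : 2*Λ*rc^2 - (3+t) < 0 := by
      have := mul_lt_mul_of_pos_left hrc2 (show (0:ℝ) < 2*Λ by linarith)
      linarith [h2Lb]
    have f2 : 0 < 2*Λ*rc^2 - (3-t) := by linarith [hga, hs0, ht]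
    have : Λ*rc^4 - 3*rc^2 + Q^2 < 0 := by
      rw [hfac2]; exact div_neg_of_neg_of_pos (mul_neg_of_neg_of_pos f1 f2) h4L
    linarith
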